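/- Let c_{k,j} be rational numbers determined by q_{k,j} = (2k+4j)·c_{k,j} + (j+1)·c_{k,j+1} for k ≥ 1, k ≥ j ≥ 0 (with c_{k,j} = 0 for j > k), where q_{k,j} are given by the recursion q_{0,0}=1, q_{k,j} = (2k+4j−2)q_{k−1,j−1} + (j+1)q_{k−1,j} + Σ_{m=0}^{k−1}Σ_{l=0}^{j−1} q_{m,l}q_{k−1−m,j−1−l}. Then the diagonal coefficients satisfy Σ_{k≥1} c_{k,k} z^k = log(Σ_{k≥0} ((6k)!/((2k)!(3k)!))·(z/72)^k). -/

import Mathlib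

open PowerSeries

/-- `A(z) = Σ_{k≥0} ((6k)!/((2k)!(3k)!)) (z/72)^k`. -/
noncomputable def hgA : PowerSeries ℚ :=
  PowerSeries.mk fun k =>
    ((6 * k).factorial : ℚ) / (((2 * k).factorial : ℚ) * ((3 * k).factorial : ℚ)) / 72 ^ k

/-- `log(1+x) = Σ_{n≥1} (-1)^{n-1} x^n / n`. -/
noncomputable def logOneAdd : PowerSeries ℚ :=
  PowerSeries.mk fun n => if n = 0 then 0 else (-1) ^ (n - 1) / (n : ℚ)

/-- Composition `f ∘ g` of formal power series (the correct composition whenever the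
constant term of `g` vanishes). -/
noncomputable def comp (f g : PowerSeries ℚ) : PowerSeries ℚ :=
  PowerSeries.mk fun n =>
    ∑ k ∈ Finset.range (n + 1),
      PowerSeries.coeff k f * PowerSeries.coeff n (g ^ k)

/-! ### Auxiliary material -/

/-- The operator `θ = z d/dz` on formal power series. -/
noncomputable def th (f : PowerSeries ℚ) : PowerSeries ℚ := X * (PowerSeries.derivative ℚ f)

lemma coeff_th (f : PowerSeries ℚ) (n : ℕ) : coeff n (th f) = n * coeff n f := by
  cases n with
  | zero => simp [th, PowerSeries.coeff_zero_eq_constantCoeff]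
  | succ n =>
    rw [th, PowerSeries.coeff_succ_X_mul, PowerSeries.coeff_derivative]; push_cast; ring

lemma th_mul (f g : PowerSeries ℚ) : th (f * g) = th f * g + f * th g := by
  simp only [th, Derivation.leibniz, smul_eq_mul]; ring

lemma th_pow (g : PowerSeries ℚ) (k : ℕ) : th (g ^ k) = k • (g ^ (k-1) * th g) := by
  simp only [th, Derivation.leibniz_pow, smul_eq_mul, smul_mul_assoc]; ring

lemma pow_vanish {g : PowerSeries ℚ} (hg : constantCoeff g = 0) :
    ∀ k n : ℕ, n < k → coeff n (g ^ k) = 0 := by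
  intro k
  induction k with
  | zero => omega
  | succ k ih =>
    intro n hn
    rw [pow_succ, PowerSeries.coeff_mul]
    apply Finset.sum_eq_zero
    rintro ⟨i, j⟩ hij
    rw [Finset.HasAntidiagonal.mem_antidiagonal] at hij
    rcases lt_or_ge i k with h | h
    · rw [ih i h, zero_mul]
    · have : j = 0 := by omega
      subst this
      rw [PowerSeries.coeff_zero_eq_constantCoeff, hg, mul_zero]

lemma aux_pow_mul_coeff {g : PowerSeries ℚ} (hg : constantCoeff g = 0)
    {j k : ℕ} (hjk : j ≤ k) (h : PowerSeries ℚ) (hh : coeff 0 h = 0) :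
    coeff j (g ^ k * h) = 0 := by
  rw [PowerSeries.coeff_mul]
  apply Finset.sum_eq_zero
  rintro ⟨i1, i2⟩ hij
  rw [Finset.HasAntidiagonal.mem_antidiagonal] at hij
  rcases lt_or_ge i1 k with hlt | hge
  · rw [pow_vanish hg k i1 hlt, zero_mul]
  · have h2 : i2 = 0 := by omega
    subst h2; rw [hh, mul_zero]

lemma coeff_neg_pow_mul (g h : PowerSeries ℚ) (i j : ℕ) :
    coeff j ((-g) ^ i * h) = (-1) ^ i * coeff j (g ^ i * h) := by
  rw [show (-g) = (-1 : ℚ) • g by simp, smul_pow, smul_mul_assoc, map_smul, smul_eq_mul]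

lemma coeff_thL {g : PowerSeries ℚ} (hg : constantCoeff g = 0) (j N : ℕ) (hjN : j ≤ N) :
    coeff j (th (comp logOneAdd g)) =
      coeff j ((∑ k ∈ Finset.range N, (-g) ^ k) * th g) := by
  have hth0 : coeff 0 (th g) = 0 := by rw [coeff_th]; simp
  rw [coeff_th]
  simp only [comp, coeff_mk, logOneAdd]
  rw [Finset.mul_sum]
  have step1 : ∀ k ∈ Finset.range (j+1),
      (j : ℚ) * ((if k = 0 then 0 else (-1:ℚ) ^ (k - 1) / (k:ℚ)) * coeff j (g ^ k))
      = (if k = 0 then (0:ℚ) else (-1:ℚ)^(k-1) * coeff j (g ^ (k-1) * th g)) := by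
    intro k _
    rcases Nat.eq_zero_or_pos k with rfl | hk
    · simp
    · have hk0 : k ≠ 0 := hk.ne'
      have hkQ : (k : ℚ) ≠ 0 := Nat.cast_ne_zero.mpr hk0
      simp only [if_neg hk0]
      calc (j : ℚ) * ((-1:ℚ) ^ (k - 1) / (k:ℚ) * coeff j (g ^ k))
          = (-1:ℚ) ^ (k - 1) / (k:ℚ) * ((j:ℚ) * coeff j (g ^ k)) := by ring
        _ = (-1:ℚ) ^ (k - 1) / (k:ℚ) * coeff j (th (g ^ k)) := by rw [coeff_th]
        _ = (-1:ℚ) ^ (k - 1) / (k:ℚ) * ((k:ℚ) * coeff j (g ^ (k-1) * th g)) := by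
            rw [th_pow, map_nsmul, nsmul_eq_mul]
        _ = (-1:ℚ)^(k-1) * coeff j (g ^ (k-1) * th g) := by field_simp
  rw [Finset.sum_congr rfl step1, Finset.sum_range_succ']
  simp only [if_neg (Nat.succ_ne_zero _), Nat.add_sub_cancel, if_true, add_zero]
  simp only [Finset.sum_mul, map_sum]
  have step2 : ∀ k ∈ Finset.range N, coeff j ((-g) ^ k * th g)
      = (-1:ℚ)^k * coeff j (g ^ k * th g) := fun k _ => coeff_neg_pow_mul g (th g) k j
  rw [Finset.sum_congr rfl step2]

  apply Finset.sum_subset (Finset.range_subset_range.mpr hjN)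
  intro k _ hk
  rw [Finset.mem_range, not_lt] at hk
  rw [aux_pow_mul_coeff hg hk (th g) hth0, mul_zero]

lemma key1 {g : PowerSeries ℚ} (hg : constantCoeff g = 0) :
    (1 + g) * th (comp logOneAdd g) = th g := by
  have hth0 : coeff 0 (th g) = 0 := by rw [coeff_th]; simp
  ext n
  rw [PowerSeries.coeff_mul]
  have step : ∀ p ∈ Finset.HasAntidiagonal.antidiagonal n,
      coeff p.1 (1 + g) * coeff p.2 (th (comp logOneAdd g))
      = coeff p.1 (1 + g) * coeff p.2 ((∑ k ∈ Finset.range n, (-g) ^ k) * th g) := by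
    rintro ⟨i, j⟩ hij
    rw [Finset.HasAntidiagonal.mem_antidiagonal] at hij
    rw [coeff_thL hg j n (by omega)]
  rw [Finset.sum_congr rfl step, ← PowerSeries.coeff_mul]
  have geom : (1 + g) * (∑ k ∈ Finset.range n, (-g) ^ k) = 1 - (-g) ^ n := by
    have := geom_sum_mul (-g) n
    linear_combination -this
  rw [← mul_assoc, geom, sub_mul, one_mul, map_sub]
  rw [coeff_neg_pow_mul, aux_pow_mul_coeff hg (le_refl n) (th g) hth0, mul_zero, sub_zero]

lemma constCoeff_hgA : constantCoeff hgA = 1 := by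
  have h : constantCoeff hgA = coeff 0 hgA := by rw [PowerSeries.coeff_zero_eq_constantCoeff]
  rw [h]
  simp [hgA, Nat.factorial]

lemma fact_ratio (n : ℕ) :
    (6 * (n+1) : ℚ) * coeff (n+1) hgA = ((6*n+1 : ℚ) * (6*n+5)) * coeff n hgA := by
  have e6 : 6 * (n+1) = (6*n+5)+1 := by omega
  have e2 : 2 * (n+1) = (2*n+1)+1 := by omega
  have e3 : 3 * (n+1) = (3*n+2)+1 := by omega
  have h6 : ((6*(n+1)).factorial : ℚ) =
      (6*n+6) * ((6*n+5)) * ((6*n+4)) * ((6*n+3)) * ((6*n+2)) * ((6*n+1)) * ((6*n).factorial : ℚ) := by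
    rw [e6]
    rw [Nat.factorial_succ, show 6*n+5 = (6*n+4)+1 by omega, Nat.factorial_succ,
      show 6*n+4 = (6*n+3)+1 by omega, Nat.factorial_succ,
      show 6*n+3 = (6*n+2)+1 by omega, Nat.factorial_succ,
      show 6*n+2 = (6*n+1)+1 by omega, Nat.factorial_succ,
      show 6*n+1 = (6*n)+1 by omega, Nat.factorial_succ]
    push_cast; ring
  have h2 : ((2*(n+1)).factorial : ℚ) = (2*n+2) * (2*n+1) * ((2*n).factorial : ℚ) := by
    rw [e2, Nat.factorial_succ, show 2*n+1 = (2*n)+1 by omega, Nat.factorial_succ]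
    push_cast; ring
  have h3 : ((3*(n+1)).factorial : ℚ) =
      (3*n+3) * (3*n+2) * (3*n+1) * ((3*n).factorial : ℚ) := by
    rw [e3, Nat.factorial_succ, show 3*n+2 = (3*n+1)+1 by omega, Nat.factorial_succ,
      show 3*n+1 = (3*n)+1 by omega, Nat.factorial_succ]
    push_cast; ring
  simp only [hgA, coeff_mk]
  rw [h6, h2, h3]
  have f2 : ((2*n).factorial : ℚ) ≠ 0 := Nat.cast_ne_zero.mpr (Nat.factorial_ne_zero _)
  have f3 : ((3*n).factorial : ℚ) ≠ 0 := Nat.cast_ne_zero.mpr (Nat.factorial_ne_zero _)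
  have f72 : (72 : ℚ) ^ n ≠ 0 := pow_ne_zero _ (by norm_num)
  have c1 : (2*n+2 : ℚ) ≠ 0 := by positivity
  have c2 : (2*n+1 : ℚ) ≠ 0 := by positivity
  have c3 : (3*n+3 : ℚ) ≠ 0 := by positivity
  have c4 : (3*n+2 : ℚ) ≠ 0 := by positivity
  have c5 : (3*n+1 : ℚ) ≠ 0 := by positivity
  rw [pow_succ]
  field_simp
  ring

lemma key2 : C 6 * th hgA =
    X * (C 36 * th (th hgA) + C 36 * th hgA + C 5 * hgA) := by
  ext n
  cases n with
  | zero =>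
    simp only [PowerSeries.coeff_zero_eq_constantCoeff, map_mul, constantCoeff_X, zero_mul]
    simp [th]
  | succ n =>
    rw [PowerSeries.coeff_succ_X_mul]
    simp only [map_add, PowerSeries.coeff_C_mul, coeff_th]
    have := fact_ratio n
    push_cast
    push_cast at this
    nlinarith [this]

/-- `u = θ log A`. -/
noncomputable def uu : PowerSeries ℚ := th (comp logOneAdd (hgA - 1))

lemma hgA_ne_zero : hgA ≠ 0 := by
  intro h
  have := constCoeff_hgA
  rw [h, map_zero] at this
  exact zero_ne_one this

lemma hAu : hgA * uu = th hgA := by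
  have hg0 : constantCoeff (hgA - 1) = 0 := by
    rw [map_sub, constCoeff_hgA, map_one, sub_self]
  have h := key1 hg0
  rw [show (1 : PowerSeries ℚ) + (hgA - 1) = hgA by ring] at h
  rw [uu, h, th]
  rw [map_sub]
  simp [th]

lemma ode : C 6 * uu =
    X * (C 36 * (uu * uu) + C 36 * th uu + C 36 * uu + C 5) := by
  have h2 : th (th hgA) = (hgA * uu) * uu + hgA * th uu := by
    rw [← hAu, th_mul, hAu]
  apply mul_left_cancel₀ hgA_ne_zero
  calc hgA * (C 6 * uu) = C 6 * (hgA * uu) := by ring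
    _ = C 6 * th hgA := by rw [hAu]
    _ = X * (C 36 * th (th hgA) + C 36 * th hgA + C 5 * hgA) := key2
    _ = X * (C 36 * ((hgA * uu) * uu + hgA * th uu) + C 36 * (hgA * uu) + C 5 * hgA) := by
        rw [h2, hAu]
    _ = hgA * (X * (C 36 * (uu * uu) + C 36 * th uu + C 36 * uu + C 5)) := by ring

lemma uu_zero : coeff 0 uu = 0 := by rw [uu, coeff_th]; simp

lemma urec (k : ℕ) : 6 * coeff (k+1) uu =
    36 * coeff k (uu * uu) + 36 * k * coeff k uu + 36 * coeff k uu +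
      (if k = 0 then 5 else 0) := by
  have := congrArg (coeff (k+1)) ode
  rw [PowerSeries.coeff_C_mul, PowerSeries.coeff_succ_X_mul] at this
  simp only [map_add, PowerSeries.coeff_C_mul, coeff_th, PowerSeries.coeff_C] at this
  linarith [this]

/-- If the `q_{k,j}` are given by the recursion of Ionel and the `c_{k,j}` are
determined by `q_{k,j} = (2k+4j)c_{k,j} + (j+1)c_{k,j+1}` (with `c_{k,j} = 0` for
`j > k`), then `Σ_{k≥1} c_{k,k} z^k = log A`. -/
theorem diag_c_eq_logA (q c : ℕ → ℕ → ℚ)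
    (h0 : q 0 0 = 1)
    (hvanish : ∀ k j, k < j → q k j = 0)
    (hrec : ∀ k j : ℕ, j ≤ k + 1 →
      q (k + 1) j =
        (2 * ((k : ℚ) + 1) + 4 * j - 2) * (if j = 0 then 0 else q k (j - 1)) +
          ((j : ℚ) + 1) * q k j +
          ∑ m ∈ Finset.range (k + 1), ∑ l ∈ Finset.range j,
            q m l * q (k - m) (j - 1 - l))
    (hcvanish : ∀ k j, k < j → c k j = 0)
    (hcrec : ∀ k j : ℕ, 1 ≤ k → j ≤ k →
      q k j = (2 * (k : ℚ) + 4 * j) * c k j + ((j : ℚ) + 1) * c k (j + 1)) :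
    (PowerSeries.mk fun k => if k = 0 then 0 else c k k) = comp logOneAdd (hgA - 1) := by
  -- Step 1 : the diagonal recursion for q
  have L1 : ∀ k : ℕ, q (k+1) (k+1) =
      (6*(k:ℚ)+4) * q k k + ∑ m ∈ Finset.range (k+1), q m m * q (k-m) (k-m) := by
    intro k
    have h := hrec k (k+1) (le_refl _)
    rw [if_neg (Nat.succ_ne_zero k), Nat.add_sub_cancel] at h
    rw [hvanish k (k+1) (by omega), mul_zero, add_zero] at h
    have hinner : ∀ m ∈ Finset.range (k+1),
        ∑ l ∈ Finset.range (k+1), q m l * q (k-m) (k-l) = q m m * q (k-m) (k-m) := by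
      intro m hm
      rw [Finset.mem_range] at hm
      apply Finset.sum_eq_single_of_mem m (Finset.mem_range.mpr hm)
      intro l hl hlm
      rw [Finset.mem_range] at hl
      rcases lt_or_gt_of_ne hlm with hlt | hgt
      · rw [hvanish (k-m) (k-l) (by omega), mul_zero]
      · rw [hvanish m l hgt, zero_mul]
    rw [Finset.sum_congr rfl hinner] at h
    rw [h]
    push_cast
    ring
  -- Step 2 : diagonal of q equals 6 * coefficients of uu
  have L2 : ∀ n : ℕ, 1 ≤ n → q n n = 6 * coeff n uu := by
    intro n
    induction n using Nat.strong_induction_on with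
    | _ n IH =>
      intro hn
      obtain ⟨k, rfl⟩ : ∃ k, n = k + 1 := ⟨n - 1, by omega⟩
      rw [L1 k]
      rcases Nat.eq_zero_or_pos k with rfl | hk
      · have h1 := urec 0
        rw [if_pos rfl] at h1
        have hsq : coeff 0 (uu * uu) = 0 := by
          rw [PowerSeries.coeff_zero_eq_constantCoeff, map_mul]
          rw [← PowerSeries.coeff_zero_eq_constantCoeff, uu_zero, zero_mul]
        rw [hsq, uu_zero] at h1
        simp only [zero_add, Finset.sum_range_one, Nat.sub_zero, h0]
        push_cast
        linarith [h1]
      · have hkk : q k k = 6 * coeff k uu := IH k (by omega) hk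
        have hsq : coeff k (uu * uu) =
            ∑ m ∈ Finset.range (k+1), coeff m uu * coeff (k-m) uu := by
          rw [PowerSeries.coeff_mul, Finset.Nat.sum_antidiagonal_eq_sum_range_succ_mk]
        have hterm : ∀ m ∈ Finset.range (k+1),
            q m m * q (k-m) (k-m) =
              36 * coeff m uu * coeff (k-m) uu +
              ((if m = 0 then 6 * coeff k uu else 0) +
               (if m = k then 6 * coeff k uu else 0)) := by
          intro m hm
          rw [Finset.mem_range] at hm
          rcases Nat.eq_zero_or_pos m with rfl | hm1
          · rw [if_pos rfl, if_neg (by omega), Nat.sub_zero, h0, one_mul, hkk, uu_zero]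
            ring
          · rcases eq_or_lt_of_le (Nat.lt_succ_iff.mp hm) with rfl | hmk
            · rw [if_neg (by omega), if_pos rfl, Nat.sub_self, h0, mul_one, hkk, uu_zero]
              ring
            · rw [if_neg (by omega), if_neg (by omega)]
              rw [IH m (by omega) hm1, IH (k-m) (by omega) (by omega)]
              ring
        rw [Finset.sum_congr rfl hterm, Finset.sum_add_distrib, Finset.sum_add_distrib]
        rw [Finset.sum_ite_eq' (Finset.range (k+1)) 0 (fun _ => 6 * coeff k uu),
          Finset.sum_ite_eq' (Finset.range (k+1)) k (fun _ => 6 * coeff k uu)]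
        rw [if_pos (Finset.mem_range.mpr (by omega)), if_pos (Finset.mem_range.mpr (by omega))]
        have h1 := urec k
        rw [if_neg (by omega), hsq] at h1
        rw [hkk]
        have hms : ∑ m ∈ Finset.range (k+1), 36 * coeff m uu * coeff (k-m) uu
            = 36 * ∑ m ∈ Finset.range (k+1), coeff m uu * coeff (k-m) uu := by
          rw [Finset.mul_sum]
          apply Finset.sum_congr rfl
          intros; ring
        rw [hms]
        linarith [h1]
  -- Step 3 : conclude coefficientwise
  ext n
  rw [coeff_mk]
  rcases Nat.eq_zero_or_pos n with rfl | hn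
  · rw [if_pos rfl]
    simp [comp, logOneAdd]
  · rw [if_neg (by omega)]
    have hq : q n n = (6*(n:ℚ)) * c n n := by
      have h := hcrec n n hn (le_refl n)
      rw [hcvanish n (n+1) (by omega), mul_zero, add_zero] at h
      rw [h]; ring
    have hu : coeff n uu = n * coeff n (comp logOneAdd (hgA - 1)) := by
      rw [uu, coeff_th]
    have h6n : (6*(n:ℚ)) ≠ 0 := by
      have : (0:ℚ) < n := by exact_mod_cast hn
      positivity
    apply mul_left_cancel₀ h6n
    rw [← hq, L2 n hn, hu]
    ring
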